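/- Let F = x³+y³+z³+t·x·y·z with t³+27 ≠ 0. The second Hessian H₂(F) of F is, up to a nonzero constant factor and modulo the ideal generated by F, equal to (x³−y³)(x³−z³)(y³−z³). -/

import Mathlib

open MvPolynomial

/-- The Hesse pencil cubic `F = x³ + y³ + z³ + t·x·y·z`. -/
noncomputable def hesseF (t : ℂ) : MvPolynomial (Fin 3) ℂ :=
  X 0 ^ 3 + X 1 ^ 3 + X 2 ^ 3 + C t * X 0 * X 1 * X 2

/-- The Hessian matrix of the Hesse cubic. -/
noncomputable def hesseHM (t : ℂ) : Matrix (Fin 3) (Fin 3) (MvPolynomial (Fin 3) ℂ) :=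
  Matrix.of fun i j => pderiv i (pderiv j (hesseF t))

/-- The Hessian `H = det(Hessian matrix)` of the Hesse cubic. -/
noncomputable def hesseH (t : ℂ) : MvPolynomial (Fin 3) ℂ := (hesseHM t).det

/-- The vector `M = [M₁₁, M₂₂, M₃₃, M₃₂, M₃₁, M₂₁]` of 2×2 cofactor-type minors of
the Hessian matrix. -/
noncomputable def hesseM (t : ℂ) : Fin 6 → MvPolynomial (Fin 3) ℂ :=
  ![hesseHM t 1 1 * hesseHM t 2 2 - hesseHM t 1 2 * hesseHM t 2 1,
    hesseHM t 0 0 * hesseHM t 2 2 - hesseHM t 0 2 * hesseHM t 2 0,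
    hesseHM t 0 0 * hesseHM t 1 1 - hesseHM t 0 1 * hesseHM t 1 0,
    -(hesseHM t 0 0 * hesseHM t 1 2 - hesseHM t 0 2 * hesseHM t 1 0),
    hesseHM t 0 1 * hesseHM t 1 2 - hesseHM t 0 2 * hesseHM t 1 1,
    -(hesseHM t 0 1 * hesseHM t 2 2 - hesseHM t 0 2 * hesseHM t 2 1)]

/-- The vector `V_H = [Hₓₓ, H_yy, H_zz, 2H_yz, 2H_xz, 2H_xy]`. -/
noncomputable def hesseVH (t : ℂ) : Fin 6 → MvPolynomial (Fin 3) ℂ :=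
  ![pderiv 0 (pderiv 0 (hesseH t)), pderiv 1 (pderiv 1 (hesseH t)),
    pderiv 2 (pderiv 2 (hesseH t)), 2 * pderiv 1 (pderiv 2 (hesseH t)),
    2 * pderiv 0 (pderiv 2 (hesseH t)), 2 * pderiv 0 (pderiv 1 (hesseH t))]

/-- The "gradient" row `∂_•(Ω₁(M,V_H)) = ∂_•M ∘ V_H`. -/
noncomputable def hesseOmega1Row (t : ℂ) : Fin 3 → MvPolynomial (Fin 3) ℂ :=
  fun b => ∑ k : Fin 6, pderiv b (hesseM t k) * hesseVH t k

/-- The "gradient" row `∂_•(Ω₂(M,V_H)) = M ∘ ∂_•V_H`. -/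
noncomputable def hesseOmega2Row (t : ℂ) : Fin 3 → MvPolynomial (Fin 3) ℂ :=
  fun b => ∑ k : Fin 6, hesseM t k * pderiv b (hesseVH t k)

/-- The bordered Hessian polynomial `Ψ`. -/
noncomputable def hessePsi (t : ℂ) : MvPolynomial (Fin 3) ℂ :=
  -(Matrix.of
    ![![0, pderiv 0 (hesseH t), pderiv 1 (hesseH t), pderiv 2 (hesseH t)],
      ![pderiv 0 (hesseH t), hesseHM t 0 0, hesseHM t 0 1, hesseHM t 0 2],
      ![pderiv 1 (hesseH t), hesseHM t 1 0, hesseHM t 1 1, hesseHM t 1 2],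
      ![pderiv 2 (hesseH t), hesseHM t 2 0, hesseHM t 2 1, hesseHM t 2 2]]).det

/-- The Jacobian determinant with rows `∇f`, `∇g` and a given vector `w`. -/
noncomputable def jacRow (f g : MvPolynomial (Fin 3) ℂ)
    (w : Fin 3 → MvPolynomial (Fin 3) ℂ) : MvPolynomial (Fin 3) ℂ :=
  (Matrix.of
    ![![pderiv 0 f, pderiv 1 f, pderiv 2 f],
      ![pderiv 0 g, pderiv 1 g, pderiv 2 g],
      w]).det

/-- The second Hessian of the Hesse cubic (`d = 3`):
`H₂(F) = 3·H·Jac(F,H,Ω₁) + 9·H·Jac(F,H,Ω₂) − 20·Jac(F,H,Ψ)`. -/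
noncomputable def hesseH2 (t : ℂ) : MvPolynomial (Fin 3) ℂ :=
  C 3 * hesseH t * jacRow (hesseF t) (hesseH t) (hesseOmega1Row t)
    + C 9 * hesseH t * jacRow (hesseF t) (hesseH t) (hesseOmega2Row t)
    - C 20 * jacRow (hesseF t) (hesseH t)
        (fun b => pderiv b (hessePsi t))

set_option maxHeartbeats 1000000 in
private theorem hesse_det_fin_four {R} [CommRing R] (A : Matrix (Fin 4) (Fin 4) R) :
    A.det =
      A 0 0 * (A 1 1 * A 2 2 * A 3 3 - A 1 1 * A 2 3 * A 3 2 - A 1 2 * A 2 1 * A 3 3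
        + A 1 2 * A 2 3 * A 3 1 + A 1 3 * A 2 1 * A 3 2 - A 1 3 * A 2 2 * A 3 1)
      - A 0 1 * (A 1 0 * A 2 2 * A 3 3 - A 1 0 * A 2 3 * A 3 2 - A 1 2 * A 2 0 * A 3 3
        + A 1 2 * A 2 3 * A 3 0 + A 1 3 * A 2 0 * A 3 2 - A 1 3 * A 2 2 * A 3 0)
      + A 0 2 * (A 1 0 * A 2 1 * A 3 3 - A 1 0 * A 2 3 * A 3 1 - A 1 1 * A 2 0 * A 3 3
        + A 1 1 * A 2 3 * A 3 0 + A 1 3 * A 2 0 * A 3 1 - A 1 3 * A 2 1 * A 3 0)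
      - A 0 3 * (A 1 0 * A 2 1 * A 3 2 - A 1 0 * A 2 2 * A 3 1 - A 1 1 * A 2 0 * A 3 2
        + A 1 1 * A 2 2 * A 3 0 + A 1 2 * A 2 0 * A 3 1 - A 1 2 * A 2 1 * A 3 0) := by
  rw [Matrix.det_succ_row_zero]
  simp [Fin.sum_univ_succ, Matrix.det_fin_three, Matrix.submatrix_apply, Fin.succAbove,
    Fin.ext_iff]
  ring

private lemma hesse_pd_ofNat (i : Fin 3) (n : ℕ) [n.AtLeastTwo] :
    pderiv i (no_index (OfNat.ofNat n) : MvPolynomial (Fin 3) ℂ) = 0 := by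
  rw [← map_ofNat (C : ℂ →+* MvPolynomial (Fin 3) ℂ) n, pderiv_C]

private lemma hHMe (t : ℂ) : hesseHM t = Matrix.of
    ![![6*X 0, C t * X 2, C t * X 1],
      ![C t * X 2, 6*X 1, C t * X 0],
      ![C t * X 1, C t * X 0, 6*X 2]] := by
  refine Matrix.ext fun i j => ?_
  simp only [hesseHM, hesseF, Matrix.of_apply]
  fin_cases i <;> fin_cases j <;> simp [pderiv_X, Pi.single_apply, pderiv_mul, pow_succ, hesse_pd_ofNat] <;> ring

private lemma hHe (t : ℂ) : hesseH t = (-6)*X 2^3*C t^2 + (-6)*X 1^3*C t^2 + 216*X 0*X 1*X 2 + 2*X 0*X 1*X 2*C t^3 + (-6)*X 0^3*C t^2 := by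
  simp only [hesseH, hHMe, Matrix.det_fin_three, Matrix.cons_val', Matrix.cons_val_zero, Matrix.cons_val_one, Matrix.head_cons,
    Matrix.empty_val', Matrix.cons_val_fin_one, Matrix.cons_val_two, Matrix.tail_cons,
    Matrix.cons_val_three, Matrix.cons_val_four, Matrix.cons_val_succ, Matrix.head_fin_const,
    Matrix.of_apply, show ((5:Fin 6)) = Fin.succ 4 from rfl]
  ring

private lemma pdH0 (t : ℂ) : pderiv 0 (hesseH t) = 216*X 1*X 2 + 2*X 1*X 2*C t^3 + (-18)*X 0^2*C t^2 := by
  rw [hHe]; simp [pderiv_X, Pi.single_apply, pderiv_mul, pow_succ, hesse_pd_ofNat]; ring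

private lemma pdH1 (t : ℂ) : pderiv 1 (hesseH t) = (-18)*X 1^2*C t^2 + 216*X 0*X 2 + 2*X 0*X 2*C t^3 := by
  rw [hHe]; simp [pderiv_X, Pi.single_apply, pderiv_mul, pow_succ, hesse_pd_ofNat]; ring

private lemma pdH2 (t : ℂ) : pderiv 2 (hesseH t) = (-18)*X 2^2*C t^2 + 216*X 0*X 1 + 2*X 0*X 1*C t^3 := by
  rw [hHe]; simp [pderiv_X, Pi.single_apply, pderiv_mul, pow_succ, hesse_pd_ofNat]; ring

private lemma pdF0 (t : ℂ) : pderiv 0 (hesseF t) = X 1*X 2*C t + 3*X 0^2 := by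
  rw [hesseF]; simp [pderiv_X, Pi.single_apply, pderiv_mul, pow_succ, hesse_pd_ofNat]; ring

private lemma pdF1 (t : ℂ) : pderiv 1 (hesseF t) = 3*X 1^2 + X 0*X 2*C t := by
  rw [hesseF]; simp [pderiv_X, Pi.single_apply, pderiv_mul, pow_succ, hesse_pd_ofNat]; ring

private lemma pdF2 (t : ℂ) : pderiv 2 (hesseF t) = 3*X 2^2 + X 0*X 1*C t := by
  rw [hesseF]; simp [pderiv_X, Pi.single_apply, pderiv_mul, pow_succ, hesse_pd_ofNat]; ring

private lemma hMe0 (t : ℂ) : hesseM t 0 = 36*X 1*X 2 + (-1)*X 0^2*C t^2 := by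
  simp only [hesseM, hHMe, Matrix.cons_val', Matrix.cons_val_zero, Matrix.cons_val_one, Matrix.head_cons,
    Matrix.empty_val', Matrix.cons_val_fin_one, Matrix.cons_val_two, Matrix.tail_cons,
    Matrix.cons_val_three, Matrix.cons_val_four, Matrix.cons_val_succ, Matrix.head_fin_const,
    Matrix.of_apply, show ((5:Fin 6)) = Fin.succ 4 from rfl]
  ring

private lemma hMe1 (t : ℂ) : hesseM t 1 = (-1)*X 1^2*C t^2 + 36*X 0*X 2 := by
  simp only [hesseM, hHMe, Matrix.cons_val', Matrix.cons_val_zero, Matrix.cons_val_one, Matrix.head_cons,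
    Matrix.empty_val', Matrix.cons_val_fin_one, Matrix.cons_val_two, Matrix.tail_cons,
    Matrix.cons_val_three, Matrix.cons_val_four, Matrix.cons_val_succ, Matrix.head_fin_const,
    Matrix.of_apply, show ((5:Fin 6)) = Fin.succ 4 from rfl]
  ring

private lemma hMe2 (t : ℂ) : hesseM t 2 = (-1)*X 2^2*C t^2 + 36*X 0*X 1 := by
  simp only [hesseM, hHMe, Matrix.cons_val', Matrix.cons_val_zero, Matrix.cons_val_one, Matrix.head_cons,
    Matrix.empty_val', Matrix.cons_val_fin_one, Matrix.cons_val_two, Matrix.tail_cons,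
    Matrix.cons_val_three, Matrix.cons_val_four, Matrix.cons_val_succ, Matrix.head_fin_const,
    Matrix.of_apply, show ((5:Fin 6)) = Fin.succ 4 from rfl]
  ring

private lemma hMe3 (t : ℂ) : hesseM t 3 = X 1*X 2*C t^2 + (-6)*X 0^2*C t := by
  simp only [hesseM, hHMe, Matrix.cons_val', Matrix.cons_val_zero, Matrix.cons_val_one, Matrix.head_cons,
    Matrix.empty_val', Matrix.cons_val_fin_one, Matrix.cons_val_two, Matrix.tail_cons,
    Matrix.cons_val_three, Matrix.cons_val_four, Matrix.cons_val_succ, Matrix.head_fin_const,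
    Matrix.of_apply, show ((5:Fin 6)) = Fin.succ 4 from rfl]
  ring

private lemma hMe4 (t : ℂ) : hesseM t 4 = (-6)*X 1^2*C t + X 0*X 2*C t^2 := by
  simp only [hesseM, hHMe, Matrix.cons_val', Matrix.cons_val_zero, Matrix.cons_val_one, Matrix.head_cons,
    Matrix.empty_val', Matrix.cons_val_fin_one, Matrix.cons_val_two, Matrix.tail_cons,
    Matrix.cons_val_three, Matrix.cons_val_four, Matrix.cons_val_succ, Matrix.head_fin_const,
    Matrix.of_apply, show ((5:Fin 6)) = Fin.succ 4 from rfl]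
  ring

private lemma hMe5 (t : ℂ) : hesseM t 5 = (-6)*X 2^2*C t + X 0*X 1*C t^2 := by
  simp only [hesseM, hHMe, Matrix.cons_val', Matrix.cons_val_zero, Matrix.cons_val_one, Matrix.head_cons,
    Matrix.empty_val', Matrix.cons_val_fin_one, Matrix.cons_val_two, Matrix.tail_cons,
    Matrix.cons_val_three, Matrix.cons_val_four, Matrix.cons_val_succ, Matrix.head_fin_const,
    Matrix.of_apply, show ((5:Fin 6)) = Fin.succ 4 from rfl]
  ring

private lemma hVe0 (t : ℂ) : hesseVH t 0 = (-36)*X 0*C t^2 := by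
  simp only [hesseVH, pdH0, pdH1, pdH2, Matrix.cons_val', Matrix.cons_val_zero, Matrix.cons_val_one, Matrix.head_cons,
    Matrix.empty_val', Matrix.cons_val_fin_one, Matrix.cons_val_two, Matrix.tail_cons,
    Matrix.cons_val_three, Matrix.cons_val_four, Matrix.cons_val_succ, Matrix.head_fin_const,
    Matrix.of_apply, show ((5:Fin 6)) = Fin.succ 4 from rfl]
  simp [pderiv_X, Pi.single_apply, pderiv_mul, pow_succ, hesse_pd_ofNat]; ring

private lemma hVe1 (t : ℂ) : hesseVH t 1 = (-36)*X 1*C t^2 := by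
  simp only [hesseVH, pdH0, pdH1, pdH2, Matrix.cons_val', Matrix.cons_val_zero, Matrix.cons_val_one, Matrix.head_cons,
    Matrix.empty_val', Matrix.cons_val_fin_one, Matrix.cons_val_two, Matrix.tail_cons,
    Matrix.cons_val_three, Matrix.cons_val_four, Matrix.cons_val_succ, Matrix.head_fin_const,
    Matrix.of_apply, show ((5:Fin 6)) = Fin.succ 4 from rfl]
  simp [pderiv_X, Pi.single_apply, pderiv_mul, pow_succ, hesse_pd_ofNat]; ring

private lemma hVe2 (t : ℂ) : hesseVH t 2 = (-36)*X 2*C t^2 := by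
  simp only [hesseVH, pdH0, pdH1, pdH2, Matrix.cons_val', Matrix.cons_val_zero, Matrix.cons_val_one, Matrix.head_cons,
    Matrix.empty_val', Matrix.cons_val_fin_one, Matrix.cons_val_two, Matrix.tail_cons,
    Matrix.cons_val_three, Matrix.cons_val_four, Matrix.cons_val_succ, Matrix.head_fin_const,
    Matrix.of_apply, show ((5:Fin 6)) = Fin.succ 4 from rfl]
  simp [pderiv_X, Pi.single_apply, pderiv_mul, pow_succ, hesse_pd_ofNat]; ring

private lemma hVe3 (t : ℂ) : hesseVH t 3 = 432*X 0 + 4*X 0*C t^3 := by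
  simp only [hesseVH, pdH0, pdH1, pdH2, Matrix.cons_val', Matrix.cons_val_zero, Matrix.cons_val_one, Matrix.head_cons,
    Matrix.empty_val', Matrix.cons_val_fin_one, Matrix.cons_val_two, Matrix.tail_cons,
    Matrix.cons_val_three, Matrix.cons_val_four, Matrix.cons_val_succ, Matrix.head_fin_const,
    Matrix.of_apply, show ((5:Fin 6)) = Fin.succ 4 from rfl]
  simp [pderiv_X, Pi.single_apply, pderiv_mul, pow_succ, hesse_pd_ofNat]; ring

private lemma hVe4 (t : ℂ) : hesseVH t 4 = 432*X 1 + 4*X 1*C t^3 := by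
  simp only [hesseVH, pdH0, pdH1, pdH2, Matrix.cons_val', Matrix.cons_val_zero, Matrix.cons_val_one, Matrix.head_cons,
    Matrix.empty_val', Matrix.cons_val_fin_one, Matrix.cons_val_two, Matrix.tail_cons,
    Matrix.cons_val_three, Matrix.cons_val_four, Matrix.cons_val_succ, Matrix.head_fin_const,
    Matrix.of_apply, show ((5:Fin 6)) = Fin.succ 4 from rfl]
  simp [pderiv_X, Pi.single_apply, pderiv_mul, pow_succ, hesse_pd_ofNat]; ring

private lemma hVe5 (t : ℂ) : hesseVH t 5 = 432*X 2 + 4*X 2*C t^3 := by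
  simp only [hesseVH, pdH0, pdH1, pdH2, Matrix.cons_val', Matrix.cons_val_zero, Matrix.cons_val_one, Matrix.head_cons,
    Matrix.empty_val', Matrix.cons_val_fin_one, Matrix.cons_val_two, Matrix.tail_cons,
    Matrix.cons_val_three, Matrix.cons_val_four, Matrix.cons_val_succ, Matrix.head_fin_const,
    Matrix.of_apply, show ((5:Fin 6)) = Fin.succ 4 from rfl]
  simp [pderiv_X, Pi.single_apply, pderiv_mul, pow_succ, hesse_pd_ofNat]; ring

private lemma hO1e0 (t : ℂ) : hesseOmega1Row t 0 = (-1728)*X 1*X 2*C t^2 + 8*X 1*X 2*C t^5 + (-5184)*X 0^2*C t + 24*X 0^2*C t^4 := by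
  simp only [hesseOmega1Row, Fin.sum_univ_six, hMe0, hMe1, hMe2, hMe3, hMe4, hMe5, hVe0, hVe1, hVe2, hVe3, hVe4, hVe5]
  simp [pderiv_X, Pi.single_apply, pderiv_mul, pow_succ, hesse_pd_ofNat]; ring

private lemma hO2e0 (t : ℂ) : hesseOmega2Row t 0 = (-864)*X 1*X 2*C t^2 + 4*X 1*X 2*C t^5 + (-2592)*X 0^2*C t + 12*X 0^2*C t^4 := by
  simp only [hesseOmega2Row, Fin.sum_univ_six, hMe0, hMe1, hMe2, hMe3, hMe4, hMe5, hVe0, hVe1, hVe2, hVe3, hVe4, hVe5]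
  simp [pderiv_X, Pi.single_apply, pderiv_mul, pow_succ, hesse_pd_ofNat]; ring

private lemma hO1e1 (t : ℂ) : hesseOmega1Row t 1 = (-5184)*X 1^2*C t + 24*X 1^2*C t^4 + (-1728)*X 0*X 2*C t^2 + 8*X 0*X 2*C t^5 := by
  simp only [hesseOmega1Row, Fin.sum_univ_six, hMe0, hMe1, hMe2, hMe3, hMe4, hMe5, hVe0, hVe1, hVe2, hVe3, hVe4, hVe5]
  simp [pderiv_X, Pi.single_apply, pderiv_mul, pow_succ, hesse_pd_ofNat]; ring

private lemma hO2e1 (t : ℂ) : hesseOmega2Row t 1 = (-2592)*X 1^2*C t + 12*X 1^2*C t^4 + (-864)*X 0*X 2*C t^2 + 4*X 0*X 2*C t^5 := by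
  simp only [hesseOmega2Row, Fin.sum_univ_six, hMe0, hMe1, hMe2, hMe3, hMe4, hMe5, hVe0, hVe1, hVe2, hVe3, hVe4, hVe5]
  simp [pderiv_X, Pi.single_apply, pderiv_mul, pow_succ, hesse_pd_ofNat]; ring

private lemma hO1e2 (t : ℂ) : hesseOmega1Row t 2 = (-5184)*X 2^2*C t + 24*X 2^2*C t^4 + (-1728)*X 0*X 1*C t^2 + 8*X 0*X 1*C t^5 := by
  simp only [hesseOmega1Row, Fin.sum_univ_six, hMe0, hMe1, hMe2, hMe3, hMe4, hMe5, hVe0, hVe1, hVe2, hVe3, hVe4, hVe5]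
  simp [pderiv_X, Pi.single_apply, pderiv_mul, pow_succ, hesse_pd_ofNat]; ring

private lemma hO2e2 (t : ℂ) : hesseOmega2Row t 2 = (-2592)*X 2^2*C t + 12*X 2^2*C t^4 + (-864)*X 0*X 1*C t^2 + 4*X 0*X 1*C t^5 := by
  simp only [hesseOmega2Row, Fin.sum_univ_six, hMe0, hMe1, hMe2, hMe3, hMe4, hMe5, hVe0, hVe1, hVe2, hVe3, hVe4, hVe5]
  simp [pderiv_X, Pi.single_apply, pderiv_mul, pow_succ, hesse_pd_ofNat]; ring

set_option maxHeartbeats 2000000 in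
private lemma hPsie (t : ℂ) : hessePsi t = (-324)*X 2^6*C t^6 + 1679616*X 1^3*X 2^3 + 124416*X 1^3*X 2^3*C t^3 + 1656*X 1^3*X 2^3*C t^6 + (-324)*X 1^6*C t^6 + (-559872)*X 0*X 1*X 2^4*C t + (-6480)*X 0*X 1*X 2^4*C t^4 + (-120)*X 0*X 1*X 2^4*C t^7 + (-559872)*X 0*X 1^4*X 2*C t + (-6480)*X 0*X 1^4*X 2*C t^4 + (-120)*X 0*X 1^4*X 2*C t^7 + (-699840)*X 0^2*X 1^2*X 2^2*C t^2 + (-16848)*X 0^2*X 1^2*X 2^2*C t^5 + 12*X 0^2*X 1^2*X 2^2*C t^8 + 1679616*X 0^3*X 2^3 + 124416*X 0^3*X 2^3*C t^3 + 1656*X 0^3*X 2^3*C t^6 + 1679616*X 0^3*X 1^3 + 124416*X 0^3*X 1^3*C t^3 + 1656*X 0^3*X 1^3*C t^6 + (-559872)*X 0^4*X 1*X 2*C t + (-6480)*X 0^4*X 1*X 2*C t^4 + (-120)*X 0^4*X 1*X 2*C t^7 + (-324)*X 0^6*C t^6 := by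
  simp only [hessePsi, pdH0, pdH1, pdH2, hHMe, Matrix.cons_val', Matrix.cons_val_zero, Matrix.cons_val_one, Matrix.head_cons,
    Matrix.empty_val', Matrix.cons_val_fin_one, Matrix.cons_val_two, Matrix.tail_cons,
    Matrix.cons_val_three, Matrix.cons_val_four, Matrix.cons_val_succ, Matrix.head_fin_const,
    Matrix.of_apply, show ((5:Fin 6)) = Fin.succ 4 from rfl]
  rw [hesse_det_fin_four]
  simp only [Matrix.cons_val', Matrix.cons_val_zero, Matrix.cons_val_one, Matrix.head_cons,
    Matrix.empty_val', Matrix.cons_val_fin_one, Matrix.cons_val_two, Matrix.tail_cons,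
    Matrix.cons_val_three, Matrix.cons_val_four, Matrix.cons_val_succ, Matrix.head_fin_const,
    Matrix.of_apply, show ((5:Fin 6)) = Fin.succ 4 from rfl]
  ring

set_option maxHeartbeats 4000000 in
private lemma pdPsi0 (t : ℂ) : pderiv 0 (hessePsi t) = (-559872)*X 1*X 2^4*C t + (-6480)*X 1*X 2^4*C t^4 + (-120)*X 1*X 2^4*C t^7 + (-559872)*X 1^4*X 2*C t + (-6480)*X 1^4*X 2*C t^4 + (-120)*X 1^4*X 2*C t^7 + (-1399680)*X 0*X 1^2*X 2^2*C t^2 + (-33696)*X 0*X 1^2*X 2^2*C t^5 + 24*X 0*X 1^2*X 2^2*C t^8 + 5038848*X 0^2*X 2^3 + 373248*X 0^2*X 2^3*C t^3 + 4968*X 0^2*X 2^3*C t^6 + 5038848*X 0^2*X 1^3 + 373248*X 0^2*X 1^3*C t^3 + 4968*X 0^2*X 1^3*C t^6 + (-2239488)*X 0^3*X 1*X 2*C t + (-25920)*X 0^3*X 1*X 2*C t^4 + (-480)*X 0^3*X 1*X 2*C t^7 + (-1944)*X 0^5*C t^6 := by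
  rw [hPsie]; simp [pderiv_X, Pi.single_apply, pderiv_mul, pow_succ, hesse_pd_ofNat]; ring

set_option maxHeartbeats 4000000 in
private lemma pdPsi1 (t : ℂ) : pderiv 1 (hessePsi t) = 5038848*X 1^2*X 2^3 + 373248*X 1^2*X 2^3*C t^3 + 4968*X 1^2*X 2^3*C t^6 + (-1944)*X 1^5*C t^6 + (-559872)*X 0*X 2^4*C t + (-6480)*X 0*X 2^4*C t^4 + (-120)*X 0*X 2^4*C t^7 + (-2239488)*X 0*X 1^3*X 2*C t + (-25920)*X 0*X 1^3*X 2*C t^4 + (-480)*X 0*X 1^3*X 2*C t^7 + (-1399680)*X 0^2*X 1*X 2^2*C t^2 + (-33696)*X 0^2*X 1*X 2^2*C t^5 + 24*X 0^2*X 1*X 2^2*C t^8 + 5038848*X 0^3*X 1^2 + 373248*X 0^3*X 1^2*C t^3 + 4968*X 0^3*X 1^2*C t^6 + (-559872)*X 0^4*X 2*C t + (-6480)*X 0^4*X 2*C t^4 + (-120)*X 0^4*X 2*C t^7 := by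
  rw [hPsie]; simp [pderiv_X, Pi.single_apply, pderiv_mul, pow_succ, hesse_pd_ofNat]; ring

set_option maxHeartbeats 4000000 in
private lemma pdPsi2 (t : ℂ) : pderiv 2 (hessePsi t) = (-1944)*X 2^5*C t^6 + 5038848*X 1^3*X 2^2 + 373248*X 1^3*X 2^2*C t^3 + 4968*X 1^3*X 2^2*C t^6 + (-2239488)*X 0*X 1*X 2^3*C t + (-25920)*X 0*X 1*X 2^3*C t^4 + (-480)*X 0*X 1*X 2^3*C t^7 + (-559872)*X 0*X 1^4*C t + (-6480)*X 0*X 1^4*C t^4 + (-120)*X 0*X 1^4*C t^7 + (-1399680)*X 0^2*X 1^2*X 2*C t^2 + (-33696)*X 0^2*X 1^2*X 2*C t^5 + 24*X 0^2*X 1^2*X 2*C t^8 + 5038848*X 0^3*X 2^2 + 373248*X 0^3*X 2^2*C t^3 + 4968*X 0^3*X 2^2*C t^6 + (-559872)*X 0^4*X 1*C t + (-6480)*X 0^4*X 1*C t^4 + (-120)*X 0^4*X 1*C t^7 := by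
  rw [hPsie]; simp [pderiv_X, Pi.single_apply, pderiv_mul, pow_succ, hesse_pd_ofNat]; ring

set_option maxHeartbeats 4000000 in
private lemma hH2key (t : ℂ) : hesseH2 t = 3317760 * (C t^3 + 27)^3 *
    ((X 0 ^ 3 - X 1 ^ 3) * (X 0 ^ 3 - X 2 ^ 3) * (X 1 ^ 3 - X 2 ^ 3)) := by
  simp only [hesseH2, jacRow, Matrix.det_fin_three, Matrix.cons_val', Matrix.cons_val_zero, Matrix.cons_val_one, Matrix.head_cons,
    Matrix.empty_val', Matrix.cons_val_fin_one, Matrix.cons_val_two, Matrix.tail_cons,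
    Matrix.cons_val_three, Matrix.cons_val_four, Matrix.cons_val_succ, Matrix.head_fin_const,
    Matrix.of_apply, show ((5:Fin 6)) = Fin.succ 4 from rfl]
  simp only [pdF0, pdF1, pdF2, pdH0, pdH1, pdH2, hO1e0, hO1e1, hO1e2, hO2e0, hO2e1, hO2e2,
    pdPsi0, pdPsi1, pdPsi2, map_ofNat]
  simp only [hHe]
  ring


/-- For `t³+27 ≠ 0`, the second Hessian `H₂(F)` is, up to a nonzero constant and
modulo the ideal `(F)`, equal to `(x³−y³)(x³−z³)(y³−z³)`. -/
theorem hesse_second_hessian (t : ℂ) (ht : t ^ 3 + 27 ≠ 0) :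
    ∃ c : ℂ, c ≠ 0 ∧
      hesseH2 t - C c * ((X 0 ^ 3 - X 1 ^ 3) * (X 0 ^ 3 - X 2 ^ 3) * (X 1 ^ 3 - X 2 ^ 3))
        ∈ Ideal.span {hesseF t} := by
  refine ⟨3317760 * (t ^ 3 + 27) ^ 3, mul_ne_zero (by norm_num) (pow_ne_zero _ ht), ?_⟩
  have h0 : hesseH2 t - C (3317760 * (t ^ 3 + 27) ^ 3) *
      ((X 0 ^ 3 - X 1 ^ 3) * (X 0 ^ 3 - X 2 ^ 3) * (X 1 ^ 3 - X 2 ^ 3)) = 0 := by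
    rw [hH2key]
    simp only [map_mul, map_pow, map_add, map_ofNat]
    ring
  rw [h0]
  exact Ideal.zero_mem _
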